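/- Let u_{i,j} solve D_{Δt}^α u_{i,j} = D^{(2)}_{Δx} K(u_{i,j}) on uniform grids x_i = a + iΔx, t_j = t₀ + jΔt. Define G̃₁(i,j) = Δt Σ_{ℓ=0}^{j-1} D_{Δt}^α u_{i,ℓ}, G̃₃(i,j) = t_j G̃₁(i,j) - Δt Σ_{r=0}^{j} G̃₁(i,r), and F̃₃(i,j) = -t_j (K(u_{i,j}) - K(u_{i-1,j}))/Δx. Then D_{Δx}(i ↦ F̃₃(i,j))(i) + D_{Δt}(j ↦ G̃₃(i,j))(j) = 0 at every interior grid point (i,j). -/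

import Mathlib

/-- Discrete density `G̃₁(i,j) = Δt Σ_{ℓ=0}^{j-1} D_{Δt}^α u_{i,ℓ}`. -/
noncomputable def G1tilde (Δt : ℝ) (Dα : ℤ → ℕ → ℝ) (i : ℤ) (j : ℕ) : ℝ :=
  Δt * ∑ ℓ ∈ Finset.range j, Dα i ℓ

/-- Discrete density `G̃₃(i,j) = t_j G̃₁(i,j) - Δt Σ_{r=0}^{j} G̃₁(i,r)` on the grid
`t_j = t₀ + jΔt`. -/
noncomputable def G3tilde (t₀ Δt : ℝ) (Dα : ℤ → ℕ → ℝ) (i : ℤ) (j : ℕ) : ℝ :=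
  (t₀ + (j:ℝ)*Δt) * G1tilde Δt Dα i j - Δt * ∑ r ∈ Finset.range (j+1), G1tilde Δt Dα i r

/-- Discrete flux `F̃₃(i,j) = -t_j (K(u_{i,j}) - K(u_{i-1,j}))/Δx`. -/
noncomputable def F3tilde (t₀ Δt Δx : ℝ) (K : ℝ → ℝ) (u : ℤ → ℕ → ℝ) (i : ℤ) (j : ℕ) : ℝ :=
  -(t₀ + (j:ℝ)*Δt) * (K (u i j) - K (u (i-1) j)) / Δx

/-- Third discrete conservation law of the superdiffusion scheme. -/
theorem third_discrete_conservation_law (a t₀ Δx Δt : ℝ) (hΔx : 0 < Δx) (hΔt : 0 < Δt)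
    (K : ℝ → ℝ) (u Dα : ℤ → ℕ → ℝ)
    (hscheme : ∀ i j, Dα i j = (K (u (i+1) j) - 2*K (u i j) + K (u (i-1) j)) / Δx^2)
    (i : ℤ) (j : ℕ) :
    (F3tilde t₀ Δt Δx K u (i+1) j - F3tilde t₀ Δt Δx K u i j) / Δx +
    (G3tilde t₀ Δt Dα i (j+1) - G3tilde t₀ Δt Dα i j) / Δt = 0 := by
  have hx := hΔx.ne'
  have ht := hΔt.ne'
  simp only [F3tilde, G3tilde, G1tilde, Finset.sum_range_succ, hscheme,
    Nat.cast_add, Nat.cast_one, add_sub_cancel_left]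
  have : (i:ℤ) + 1 - 1 = i := by ring
  rw [this]
  field_simp
  ring
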